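/- Let p ∈ (0,1), q ≥ 1, and ε ∈ (0, 1/q). Let G = (V,E) be a finite graph and u, v vertices with {u,v} ∉ E such that φ_G(u↔v) ≤ ε, and let G' = (V, E ∪ {{u,v}}). Sample Y ⊆ E ∪ {{u,v}} as follows: sample X ⊆ E according to the random-cluster distribution φ_G with parameters p, q, and then set Y = X ∪ {{u,v}} with probability p/(p+(1−p)q) and Y = X otherwise. Then the distribution ν_Y of Y satisfies ‖ν_Y − φ_{G'}‖_TV ≤ 2qε, where φ_{G'} is the random-cluster distribution on G' with parameters p, q and ‖·‖_TV denotes total variation distance. -/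

import Mathlib

open scoped Classical

/-- Number of connected components of the spanning subgraph of `V` with edge set `S`
(isolated vertices count). -/
noncomputable def rcK {V : Type} [Fintype V] (S : Finset (Sym2 V)) : ℕ :=
  Nat.card (SimpleGraph.fromEdgeSet (↑S : Set (Sym2 V))).ConnectedComponent

/-- Random-cluster weight of the configuration `S ⊆ E`. -/
noncomputable def rcW {V : Type} [Fintype V] (E : Finset (Sym2 V)) (p q : ℝ)
    (S : Finset (Sym2 V)) : ℝ :=
  p ^ S.card * (1 - p) ^ (E \ S).card * q ^ rcK S

/-- Random-cluster partition function. -/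
noncomputable def rcZ {V : Type} [Fintype V] (E : Finset (Sym2 V)) (p q : ℝ) : ℝ :=
  ∑ S ∈ E.powerset, rcW E p q S

/-- Random-cluster probability of the configuration `S ⊆ E`. -/
noncomputable def rcP {V : Type} [Fintype V] (E : Finset (Sym2 V)) (p q : ℝ)
    (S : Finset (Sym2 V)) : ℝ :=
  rcW E p q S / rcZ E p q


open SimpleGraph
open scoped Classical

variable {V : Type}

lemma reach_sup_edge (G : SimpleGraph V) {u v : V} (huv : u ≠ v) (x y : V) :
    (G ⊔ edge u v).Reachable x y ↔
      G.Reachable x y ∨ (G.Reachable x u ∧ G.Reachable v y) ∨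
        (G.Reachable x v ∧ G.Reachable u y) := by
  have hadj : (G ⊔ edge u v).Adj u v := by
    right
    rw [edge_adj]
    exact ⟨Or.inl ⟨rfl, rfl⟩, huv⟩
  constructor
  · rw [reachable_iff_reflTransGen]
    intro h
    induction h with
    | refl => exact Or.inl (Reachable.refl x)
    | tail _ hbc ih =>
      rename_i b c _
      rcases hbc with hG | hE
      · rcases ih with h | ⟨h1, h2⟩ | ⟨h1, h2⟩
        · exact Or.inl (h.trans hG.reachable)
        · exact Or.inr (Or.inl ⟨h1, h2.trans hG.reachable⟩)
        · exact Or.inr (Or.inr ⟨h1, h2.trans hG.reachable⟩)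
      · rw [edge_adj] at hE
        rcases hE.1 with ⟨rfl, rfl⟩ | ⟨rfl, rfl⟩
        · rcases ih with h | ⟨h1, h2⟩ | ⟨h1, h2⟩
          · exact Or.inr (Or.inl ⟨h, Reachable.refl _⟩)
          · exact Or.inr (Or.inl ⟨h1, Reachable.refl _⟩)
          · exact Or.inl h1
        · rcases ih with h | ⟨h1, h2⟩ | ⟨h1, h2⟩
          · exact Or.inr (Or.inr ⟨h, Reachable.refl _⟩)
          · exact Or.inl h1
          · exact Or.inr (Or.inr ⟨h1, Reachable.refl _⟩)
  · rintro (h | ⟨h1, h2⟩ | ⟨h1, h2⟩)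
    · exact h.mono le_sup_left
    · exact ((h1.mono le_sup_left).trans hadj.reachable).trans (h2.mono le_sup_left)
    · exact ((h1.mono le_sup_left).trans hadj.symm.reachable).trans (h2.mono le_sup_left)

lemma card_cc_sup_edge_reach [Fintype V] (G : SimpleGraph V) {u v : V} (huv : u ≠ v)
    (hr : G.Reachable u v) :
    Nat.card (G ⊔ edge u v).ConnectedComponent = Nat.card G.ConnectedComponent := by
  symm
  apply Nat.card_eq_of_bijective
    (ConnectedComponent.map (Hom.ofLE le_sup_left))
  constructor
  · refine ConnectedComponent.ind₂ (fun x y h => ?_)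
    simp only [ConnectedComponent.map_mk, Hom.ofLE_apply,
      ConnectedComponent.eq] at h ⊢
    rcases (reach_sup_edge G huv x y).mp h with h | ⟨h1, h2⟩ | ⟨h1, h2⟩
    · exact h
    · exact (h1.trans hr).trans h2
    · exact (h1.trans hr.symm).trans h2
  · refine ConnectedComponent.ind (fun x => ?_)
    exact ⟨G.connectedComponentMk x, rfl⟩

lemma card_cc_sup_edge_not_reach [Fintype V] (G : SimpleGraph V) {u v : V} (huv : u ≠ v)
    (hr : ¬ G.Reachable u v) :
    Nat.card G.ConnectedComponent = Nat.card (G ⊔ edge u v).ConnectedComponent + 1 := by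
  classical
  set m : G.ConnectedComponent → (G ⊔ edge u v).ConnectedComponent :=
    ConnectedComponent.map (Hom.ofLE le_sup_left) with hm
  have hbij : Function.Bijective
      (fun c : {c : G.ConnectedComponent // c ≠ G.connectedComponentMk v} => m c.1) := by
    constructor
    · rintro ⟨c1, h1⟩ ⟨c2, h2⟩ h
      refine Subtype.ext ?_
      revert h1 h2 h
      refine ConnectedComponent.ind₂ (fun x y => ?_) c1 c2
      intro h1 h2 h
      simp only [hm, ConnectedComponent.map_mk, Hom.ofLE_apply,
        ConnectedComponent.eq] at h ⊢
      rcases (reach_sup_edge G huv x y).mp h with h | ⟨ha, hb⟩ | ⟨ha, hb⟩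
      · exact h
      · exact absurd (ConnectedComponent.sound hb.symm) h2
      · exact absurd (ConnectedComponent.sound ha) h1
    · refine ConnectedComponent.ind (fun x => ?_)
      by_cases hvx : G.Reachable v x
      · refine ⟨⟨G.connectedComponentMk u, ?_⟩, ?_⟩
        · simp only [ne_eq, ConnectedComponent.eq]
          exact hr
        · simp only [hm, ConnectedComponent.map_mk, Hom.ofLE_apply,
            ConnectedComponent.eq]
          exact (reach_sup_edge G huv u x).mpr (Or.inr (Or.inl ⟨Reachable.refl _, hvx⟩))
      · refine ⟨⟨G.connectedComponentMk x, ?_⟩, rfl⟩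
        simp only [ne_eq, ConnectedComponent.eq]
        exact fun h => hvx h.symm
  have hfin : Finite G.ConnectedComponent :=
    Finite.of_surjective _ Quot.mk_surjective
  calc Nat.card G.ConnectedComponent
      = Nat.card (Option {c : G.ConnectedComponent // c ≠ G.connectedComponentMk v}) :=
        Nat.card_congr (Equiv.optionSubtypeNe (G.connectedComponentMk v)).symm
    _ = Nat.card {c : G.ConnectedComponent // c ≠ G.connectedComponentMk v} + 1 :=
        Finite.card_option
    _ = Nat.card (G ⊔ edge u v).ConnectedComponent + 1 := by
        rw [Nat.card_eq_of_bijective _ hbij]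

lemma fromEdgeSet_insert_eq [Fintype V] (u v : V) (S : Finset (Sym2 V)) :
    SimpleGraph.fromEdgeSet (↑(insert s(u, v) S) : Set (Sym2 V))
      = SimpleGraph.fromEdgeSet (↑S : Set (Sym2 V)) ⊔ edge u v := by
  rw [Finset.coe_insert, Set.insert_eq, fromEdgeSet_union, sup_comm]
  rfl

lemma rcK_insert_reach [Fintype V] {u v : V} (huv : u ≠ v) (S : Finset (Sym2 V))
    (h : (SimpleGraph.fromEdgeSet (↑S : Set (Sym2 V))).Reachable u v) :
    rcK (insert s(u, v) S) = rcK S := by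
  rw [rcK, rcK, fromEdgeSet_insert_eq]
  exact card_cc_sup_edge_reach _ huv h

lemma rcK_insert_not_reach [Fintype V] {u v : V} (huv : u ≠ v) (S : Finset (Sym2 V))
    (h : ¬ (SimpleGraph.fromEdgeSet (↑S : Set (Sym2 V))).Reachable u v) :
    rcK S = rcK (insert s(u, v) S) + 1 := by
  rw [rcK, rcK, fromEdgeSet_insert_eq]
  exact card_cc_sup_edge_not_reach _ huv h

lemma sdiff_insert_of_not_mem' [Fintype V] {E S : Finset (Sym2 V)} {e : Sym2 V}
    (hS : S ⊆ E) (he : e ∉ E) :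
    (insert e E) \ (insert e S) = E \ S := by
  ext a
  simp only [Finset.mem_sdiff, Finset.mem_insert]
  constructor
  · rintro ⟨h1 | h1, h2⟩
    · exact absurd (Or.inl h1) h2
    · exact ⟨h1, fun h => h2 (Or.inr h)⟩
  · rintro ⟨h1, h2⟩
    refine ⟨Or.inr h1, ?_⟩
    rintro (rfl | h)
    · exact he h1
    · exact h2 h

lemma rcW_insert_left [Fintype V] {E S : Finset (Sym2 V)} {u v : V} (p q : ℝ)
    (hS : S ⊆ E) (he : s(u, v) ∉ E) :
    rcW (insert s(u, v) E) p q S = (1 - p) * rcW E p q S := by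
  unfold rcW
  have h1 : (insert s(u, v) E) \ S = insert s(u, v) (E \ S) :=
    Finset.insert_sdiff_of_notMem _ (fun h => he (hS h))
  rw [h1, Finset.card_insert_of_notMem (fun h => he (Finset.mem_sdiff.mp h).1), pow_succ]
  ring

lemma rcW_insert_both [Fintype V] {E S : Finset (Sym2 V)} {u v : V} (p q : ℝ) (hq0 : q ≠ 0)
    (huv : u ≠ v) (hS : S ⊆ E) (he : s(u, v) ∉ E) :
    rcW (insert s(u, v) E) p q (insert s(u, v) S)
      = p * (if (SimpleGraph.fromEdgeSet (↑S : Set (Sym2 V))).Reachable u v then 1 else q⁻¹)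
          * rcW E p q S := by
  have heS : s(u, v) ∉ S := fun h => he (hS h)
  unfold rcW
  rw [sdiff_insert_of_not_mem' hS he, Finset.card_insert_of_notMem heS, pow_succ]
  split
  · rename_i h
    rw [show rcK (insert s(u, v) S) = rcK S from rcK_insert_reach huv S h]
    ring
  · rename_i h
    rw [show rcK S = rcK (insert s(u, v) S) + 1 from rcK_insert_not_reach huv S h, pow_succ]
    field_simp

set_option maxHeartbeats 4000000 in
theorem stmt3 {V : Type} [Fintype V] (p : ℝ) (hp : p ∈ Set.Ioo (0 : ℝ) 1)
    (q : ℝ) (hq : 1 ≤ q) (ε : ℝ) (hε : ε ∈ Set.Ioo (0 : ℝ) (1 / q))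
    (E : Finset (Sym2 V)) (hE : ∀ e ∈ E, ¬ e.IsDiag)
    (u v : V) (huv : u ≠ v) (he : s(u, v) ∉ E)
    (hconn : (∑ S ∈ E.powerset,
        if (SimpleGraph.fromEdgeSet (↑S : Set (Sym2 V))).Reachable u v
        then rcP E p q S else 0) ≤ ε) :
    (1 / 2) * ∑ T ∈ (insert s(u, v) E).powerset,
        |(if s(u, v) ∈ T then (p / (p + (1 - p) * q)) * rcP E p q (T.erase s(u, v))
            else (1 - p / (p + (1 - p) * q)) * rcP E p q T)
          - rcP (insert s(u, v) E) p q T| ≤ 2 * q * ε := by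
  obtain ⟨hp0, hp1⟩ := hp
  obtain ⟨hε0, hε1⟩ := hε
  have hq0 : (0:ℝ) < q := lt_of_lt_of_le one_pos hq
  have h1p : (0:ℝ) < 1 - p := by linarith
  have hεq : ε * q ≤ 1 := by
    have := (lt_div_iff₀ hq0).mp hε1
    linarith
  have hq0' : q ≠ 0 := ne_of_gt hq0
  obtain ⟨c, hc_def⟩ : ∃ x : ℝ, x = 1 - p + p / q := ⟨_, rfl⟩
  have hpq0 : 0 < p / q := div_pos hp0 hq0
  have hc0 : 0 < c := by rw [hc_def]; linarith
  have hc0' : c ≠ 0 := ne_of_gt hc0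
  have hc1 : c ≤ 1 := by
    have h1 : p / q ≤ p := div_le_self hp0.le hq
    rw [hc_def]; linarith
  have h1c : 0 ≤ 1 - c := by linarith
  have hc1p : 1 - p ≤ c := by rw [hc_def]; linarith
  have hqc : 1 ≤ q * c := by
    have h2 : q * c = q * (1 - p) + p := by rw [hc_def]; field_simp
    have h3 : (1 - p) * 1 ≤ (1 - p) * q := by
      apply mul_le_mul_of_nonneg_left hq h1p.le
    linarith only [h2, h3]
  have hD : p + (1 - p) * q = q * c := by rw [hc_def]; field_simp; ring
  have hDpos : 0 < p + (1 - p) * q := by rw [hD]; exact mul_pos hq0 hc0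
  have hWpos : ∀ S : Finset (Sym2 V), 0 < rcW E p q S := fun S =>
    mul_pos (mul_pos (pow_pos hp0 _) (pow_pos h1p _)) (pow_pos hq0 _)
  obtain ⟨Z, hZ_def⟩ : ∃ x : ℝ, x = rcZ E p q := ⟨_, rfl⟩
  have hZpos : 0 < Z := by
    rw [hZ_def]
    exact Finset.sum_pos (fun S _ => hWpos S) (Finset.powerset_nonempty _)
  have hZ0' : Z ≠ 0 := ne_of_gt hZpos
  have hZsum : Z = ∑ S ∈ E.powerset, rcW E p q S := hZ_def.trans rfl
  obtain ⟨A, hA_def⟩ : ∃ x : ℝ, x = ∑ S ∈ E.powerset,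
      if (SimpleGraph.fromEdgeSet (↑S : Set (Sym2 V))).Reachable u v
      then rcW E p q S else 0 := ⟨_, rfl⟩
  have hA0 : 0 ≤ A := by
    rw [hA_def]
    refine Finset.sum_nonneg fun S _ => ?_
    split
    · exact (hWpos S).le
    · exact le_rfl
  have hAZ : A ≤ Z := by
    rw [hA_def, hZsum]
    refine Finset.sum_le_sum fun S _ => ?_
    split
    · exact le_rfl
    · exact (hWpos S).le
  have hAε : A ≤ ε * Z := by
    have h1 : (∑ S ∈ E.powerset,
        if (SimpleGraph.fromEdgeSet (↑S : Set (Sym2 V))).Reachable u v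
        then rcP E p q S else 0) = A / Z := by
      rw [hA_def, Finset.sum_div]
      refine Finset.sum_congr rfl fun S _ => ?_
      split
      · simp only [rcP, ← hZ_def]
      · exact (zero_div _).symm
    rw [h1] at hconn
    exact (div_le_iff₀ hZpos).mp hconn
  obtain ⟨E', hE'_def⟩ : ∃ x : Finset (Sym2 V), x = insert s(u, v) E := ⟨_, rfl⟩
  rw [← hE'_def]
  obtain ⟨Zp, hZp_def⟩ : ∃ x : ℝ, x = c * Z + (1 - c) * A := ⟨_, rfl⟩
  have hZppos : 0 < Zp := by
    rw [hZp_def]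
    linarith only [mul_pos hc0 hZpos, mul_nonneg h1c hA0]
  have hZp0' : Zp ≠ 0 := ne_of_gt hZppos
  have hZpexp0 : c * Z + (1 - c) * A ≠ 0 := by rw [← hZp_def]; exact hZp0'
  have hcZZp : c * Z ≤ Zp := by rw [hZp_def]; linarith only [mul_nonneg h1c hA0]
  have hAZp : A ≤ Zp := by
    rw [hZp_def]; linarith only [mul_nonneg hc0.le (sub_nonneg.mpr hAZ)]
  -- partition function of the larger graph
  have hW'left : ∀ S ∈ E.powerset, rcW E' p q S = (1 - p) * rcW E p q S := by
    intro S hS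
    rw [hE'_def]
    exact rcW_insert_left p q (Finset.mem_powerset.mp hS) he
  have hW'both : ∀ S ∈ E.powerset, rcW E' p q (insert s(u, v) S)
      = p * (if (SimpleGraph.fromEdgeSet (↑S : Set (Sym2 V))).Reachable u v
          then 1 else q⁻¹) * rcW E p q S := by
    intro S hS
    rw [hE'_def]
    exact rcW_insert_both p q hq0' huv (Finset.mem_powerset.mp hS) he
  have hZ'eq : rcZ E' p q = Zp := by
    have h0 : rcZ E' p q = ∑ T ∈ E'.powerset, rcW E' p q T := rfl
    rw [h0, hE'_def, Finset.sum_powerset_insert he, ← hE'_def,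
      Finset.sum_congr rfl hW'left, Finset.sum_congr rfl hW'both,
      hZp_def, hZsum, hA_def, Finset.mul_sum, Finset.mul_sum,
      ← Finset.sum_add_distrib, ← Finset.sum_add_distrib]
    refine Finset.sum_congr rfl fun S _ => ?_
    split
    · ring
    · rw [hc_def]; field_simp; ring
  have hr1 : 1 - p / (p + (1 - p) * q) = (1 - p) / c := by
    rw [hc_def]
    rw [show p + (1 - p) * q = q * (1 - p + p / q) from by field_simp; ring]
    rw [show (1:ℝ) - p / (q * (1 - p + p / q)) = (q * (1 - p + p / q) - p) / (q * (1 - p + p / q))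
      from by field_simp]
    rw [div_eq_div_iff (by rw [← hc_def, ← hD]; exact hDpos.ne') (by rw [← hc_def]; exact hc0')]
    field_simp
    ring
  have hr2 : p / (p + (1 - p) * q) = p / (q * c) := by rw [hD]
  have hPdef : ∀ S : Finset (Sym2 V), rcP E p q S = rcW E p q S / Z := by
    intro S
    simp only [rcP, ← hZ_def]
  have hP'left : ∀ S ∈ E.powerset, rcP E' p q S = (1 - p) * rcW E p q S / Zp := by
    intro S hS
    simp only [rcP]
    rw [hZ'eq, hW'left S hS]
  have hP'both : ∀ S ∈ E.powerset, rcP E' p q (insert s(u, v) S)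
      = p * (if (SimpleGraph.fromEdgeSet (↑S : Set (Sym2 V))).Reachable u v
          then 1 else q⁻¹) * rcW E p q S / Zp := by
    intro S hS
    simp only [rcP]
    rw [hZ'eq, hW'both S hS]
  obtain ⟨B1, hB1_def⟩ : ∃ x : ℝ, x = (1 - p) * ((1 - c) * A) / (c * (Z * Zp)) := ⟨_, rfl⟩
  obtain ⟨Br, hBr_def⟩ : ∃ x : ℝ, x = p * ((q - 1) * (c * Z) + (1 - c) * A) / (q * c * (Z * Zp)) :=
    ⟨_, rfl⟩
  obtain ⟨Bn, hBn_def⟩ : ∃ x : ℝ, x = p * ((1 - c) * A) / (q * c * (Z * Zp)) := ⟨_, rfl⟩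
  have hsum1 : (∑ S ∈ E.powerset,
      |(if s(u, v) ∈ S then p / (p + (1 - p) * q) * rcP E p q (S.erase s(u, v))
          else (1 - p / (p + (1 - p) * q)) * rcP E p q S) - rcP E' p q S|)
      = Z * B1 := by
    rw [hZsum, Finset.sum_mul]
    refine Finset.sum_congr rfl fun S hS => ?_
    have hSE := Finset.mem_powerset.mp hS
    have heS : s(u, v) ∉ S := fun h => he (hSE h)
    rw [if_neg heS, hr1, hP'left S hS, hPdef S]
    have hval : (1 - p) / c * (rcW E p q S / Z) - (1 - p) * rcW E p q S / Zp
        = rcW E p q S * B1 := by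
      rw [hB1_def, hZp_def]
      field_simp
      ring
    rw [hval, abs_of_nonneg]
    refine mul_nonneg (hWpos S).le ?_
    rw [hB1_def]
    exact div_nonneg (mul_nonneg h1p.le (mul_nonneg h1c hA0))
      (mul_pos hc0 (mul_pos hZpos hZppos)).le
  have key : ∀ S ∈ E.powerset,
      |(if s(u, v) ∈ insert s(u, v) S then
          p / (p + (1 - p) * q) * rcP E p q ((insert s(u, v) S).erase s(u, v))
        else (1 - p / (p + (1 - p) * q)) * rcP E p q (insert s(u, v) S))
        - rcP E' p q (insert s(u, v) S)|
      ≤ rcW E p q S * (if (SimpleGraph.fromEdgeSet (↑S : Set (Sym2 V))).Reachable u v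
          then Br else Bn) := by
    intro S hS
    have hSE := Finset.mem_powerset.mp hS
    have heS : s(u, v) ∉ S := fun h => he (hSE h)
    rw [if_pos (Finset.mem_insert_self _ _), Finset.erase_insert heS, hr2,
      hP'both S hS, hPdef S]
    by_cases hR : (SimpleGraph.fromEdgeSet (↑S : Set (Sym2 V))).Reachable u v
    · rw [if_pos hR, if_pos hR]
      have hx : p / (q * c) * (rcW E p q S / Z) - p * 1 * rcW E p q S / Zp
          = p * rcW E p q S * (Zp - q * c * Z) / (q * c * (Z * Zp)) := by
        field_simp
      have hden : (0:ℝ) < q * c * (Z * Zp) :=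
        mul_pos (mul_pos hq0 hc0) (mul_pos hZpos hZppos)
      rw [hx, abs_div, abs_of_pos hden, abs_mul, abs_of_pos (mul_pos hp0 (hWpos S))]
      have habs : |Zp - q * c * Z| ≤ (q - 1) * (c * Z) + (1 - c) * A := by
        rw [hZp_def, abs_le]
        constructor
        · linarith only [mul_nonneg (mul_nonneg (sub_nonneg.mpr hq) hc0.le) hZpos.le,
            mul_nonneg h1c hA0]
        · linarith only [mul_nonneg (mul_nonneg (sub_nonneg.mpr hq) hc0.le) hZpos.le,
            mul_nonneg h1c hA0]
      calc p * rcW E p q S * |Zp - q * c * Z| / (q * c * (Z * Zp))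
          ≤ p * rcW E p q S * ((q - 1) * (c * Z) + (1 - c) * A) / (q * c * (Z * Zp)) := by
            apply (div_le_div_iff_of_pos_right hden).mpr
            exact mul_le_mul_of_nonneg_left habs (mul_pos hp0 (hWpos S)).le
        _ = rcW E p q S * Br := by rw [hBr_def]; ring
    · rw [if_neg hR, if_neg hR]
      have hval : p / (q * c) * (rcW E p q S / Z) - p * q⁻¹ * rcW E p q S / Zp
          = rcW E p q S * Bn := by
        rw [hBn_def, hZp_def]
        field_simp
        ring
      rw [hval, abs_of_nonneg]
      refine mul_nonneg (hWpos S).le ?_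
      rw [hBn_def]
      exact div_nonneg (mul_nonneg hp0.le (mul_nonneg h1c hA0))
        (mul_pos (mul_pos hq0 hc0) (mul_pos hZpos hZppos)).le
  rw [hE'_def, Finset.sum_powerset_insert he, ← hE'_def]
  have hsum2 : (∑ S ∈ E.powerset,
      |(if s(u, v) ∈ insert s(u, v) S then
          p / (p + (1 - p) * q) * rcP E p q ((insert s(u, v) S).erase s(u, v))
        else (1 - p / (p + (1 - p) * q)) * rcP E p q (insert s(u, v) S))
        - rcP E' p q (insert s(u, v) S)|) ≤ A * Br + (Z - A) * Bn := by
    refine le_trans (Finset.sum_le_sum key) (le_of_eq ?_)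
    have hsplit : ∀ S ∈ E.powerset, rcW E p q S *
        (if (SimpleGraph.fromEdgeSet (↑S : Set (Sym2 V))).Reachable u v then Br else Bn)
        = (if (SimpleGraph.fromEdgeSet (↑S : Set (Sym2 V))).Reachable u v
            then rcW E p q S else 0) * Br
          + (rcW E p q S - (if (SimpleGraph.fromEdgeSet (↑S : Set (Sym2 V))).Reachable u v
            then rcW E p q S else 0)) * Bn := fun S _ => by split <;> ring
    rw [Finset.sum_congr rfl hsplit, Finset.sum_add_distrib, ← Finset.sum_mul, ← Finset.sum_mul,
      Finset.sum_sub_distrib, ← hA_def, ← hZsum]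
  refine le_trans (mul_le_mul_of_nonneg_left
    (add_le_add (le_of_eq hsum1) hsum2) (by norm_num : (0:ℝ) ≤ 1/2)) ?_
  · -- final arithmetic
    rw [hB1_def, hBr_def, hBn_def]
    have hcomb : Z * ((1 - p) * ((1 - c) * A) / (c * (Z * Zp)))
        + (A * (p * ((q - 1) * (c * Z) + (1 - c) * A) / (q * c * (Z * Zp)))
          + (Z - A) * (p * ((1 - c) * A) / (q * c * (Z * Zp))))
        = (q * Z * ((1 - p) * ((1 - c) * A))
            + (A * (p * ((q - 1) * (c * Z) + (1 - c) * A))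
              + (Z - A) * (p * ((1 - c) * A)))) / (q * c * (Z * Zp)) := by
      field_simp
    rw [hcomb]
    have hden2 : (0:ℝ) < 2 * (q * c * (Z * Zp)) := by
      have := mul_pos (mul_pos hq0 hc0) (mul_pos hZpos hZppos)
      linarith
    rw [show (1:ℝ)/2 * ((q * Z * ((1 - p) * ((1 - c) * A))
            + (A * (p * ((q - 1) * (c * Z) + (1 - c) * A))
              + (Z - A) * (p * ((1 - c) * A)))) / (q * c * (Z * Zp)))
        = (q * Z * ((1 - p) * ((1 - c) * A))
            + (A * (p * ((q - 1) * (c * Z) + (1 - c) * A))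
              + (Z - A) * (p * ((1 - c) * A)))) / (2 * (q * c * (Z * Zp))) from by ring,
      div_le_iff₀ hden2]
    rw [hZp_def]
    have hp1c : p * (1 - c) ≤ 1 := by
      linarith only [mul_le_mul_of_nonneg_right hp1.le h1c, h1c, hc0.le]
    have hM4 : 4 * (q * c * (q * c) * ε * (Z * Z))
        ≤ 2 * q * ε * (2 * (q * c * (Z * (c * Z + (1 - c) * A)))) := by
      linarith only [mul_nonneg (mul_nonneg (mul_pos hq0 hε0).le (mul_pos hq0 hc0).le)
        (mul_nonneg hZpos.le (mul_nonneg h1c hA0))]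
    have p1 : q * Z * ((1 - p) * ((1 - c) * A)) ≤ q * c * (q * c) * ε * (Z * Z) := by
      linarith only [mul_nonneg (mul_nonneg (mul_nonneg hq0.le hc0.le) hZpos.le)
          (sub_nonneg.mpr hAε),
        mul_nonneg (mul_nonneg hq0.le (mul_nonneg hA0 hZpos.le))
          (by linarith : (0:ℝ) ≤ c - (1 - p)),
        mul_nonneg (mul_nonneg hq0.le (mul_nonneg (mul_nonneg h1p.le hA0) hZpos.le)) hc0.le,
        mul_nonneg (mul_nonneg (mul_nonneg (mul_nonneg hq0.le hc0.le) hε0.le)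
          (mul_nonneg hZpos.le hZpos.le)) (sub_nonneg.mpr hqc)]
    have p2 : A * (p * ((q - 1) * (c * Z))) ≤ q * c * (q * c) * ε * (Z * Z) := by
      linarith only [mul_nonneg (mul_nonneg (mul_nonneg (sub_nonneg.mpr hq)
          (mul_nonneg hc0.le hZpos.le)) hA0) h1p.le,
        mul_nonneg (mul_nonneg (sub_nonneg.mpr hq) (mul_nonneg hc0.le hZpos.le))
          (sub_nonneg.mpr hAε),
        mul_nonneg (mul_nonneg hc0.le hε0.le) (mul_nonneg hZpos.le hZpos.le),
        mul_nonneg (mul_nonneg (mul_nonneg (mul_nonneg hq0.le hc0.le) hε0.le)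
          (mul_nonneg hZpos.le hZpos.le)) (sub_nonneg.mpr hqc)]
    have p3 : A * (p * ((1 - c) * A)) ≤ q * c * (q * c) * ε * (Z * Z) := by
      linarith only [mul_nonneg (mul_nonneg hA0 hA0) (by linarith : (0:ℝ) ≤ 1 - p * (1 - c)),
        mul_nonneg hA0 (sub_nonneg.mpr hAε),
        mul_nonneg (mul_nonneg hε0.le hZpos.le) (sub_nonneg.mpr hAZ),
        mul_nonneg (mul_nonneg (mul_nonneg hε0.le (mul_nonneg hZpos.le hZpos.le))
          (sub_nonneg.mpr hqc)) (by linarith only [hqc] : (0:ℝ) ≤ q * c + 1)]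
    have p4 : (Z - A) * (p * ((1 - c) * A)) ≤ q * c * (q * c) * ε * (Z * Z) := by
      linarith only [mul_nonneg (mul_nonneg hA0 (sub_nonneg.mpr hAZ))
          (by linarith : (0:ℝ) ≤ 1 - p * (1 - c)),
        mul_nonneg hA0 hA0,
        mul_nonneg hZpos.le (sub_nonneg.mpr hAε),
        mul_nonneg (mul_nonneg (mul_nonneg hε0.le (mul_nonneg hZpos.le hZpos.le))
          (sub_nonneg.mpr hqc)) (by linarith only [hqc] : (0:ℝ) ≤ q * c + 1)]
    linarith only [p1, p2, p3, p4, hM4]
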